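/- Let (V, ρ) be a real vector space with a translation invariant balanced metric (ρ(λf, 0) ≤ ρ(f, 0) for |λ| ≤ 1 and ρ(f+h, g+h) = ρ(f,g)) such that scalar multiplication is continuous at 0. If (fₙ) converges to f in (V, ρ), then there exists a subsequence (f_{n_k}) such that for every further subsequence (f_{n_{k_l}}), the Cesàro means (1/N) Σ_{l=1}^N f_{n_{k_l}} converge to f with respect to ρ. -/

import Mathlib

open Filter

theorem stmt1 {V : Type*} [AddCommGroup V] [Module ℝ V] [MetricSpace V]
    (htrans : ∀ f g h : V, dist (f + h) (g + h) = dist f g)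
    (hbal : ∀ (l : ℝ) (f : V), |l| ≤ 1 → dist (l • f) 0 ≤ dist f 0)
    (hsmul : ∀ f : V, Tendsto (fun c : ℝ => c • f) (nhds 0) (nhds (0 : V)))
    (f : ℕ → V) (g : V) (hf : Tendsto f atTop (nhds g)) :
    ∃ φ : ℕ → ℕ, StrictMono φ ∧ ∀ ψ : ℕ → ℕ, StrictMono ψ →
      Tendsto (fun N : ℕ => ((N + 1 : ℝ))⁻¹ •
          ∑ l ∈ Finset.range (N + 1), f (φ (ψ l)))
        atTop (nhds g) := by
  -- subadditivity of dist · 0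
  have hd_add : ∀ a b : V, dist (a + b) 0 ≤ dist a 0 + dist b 0 := by
    intro a b
    have h1 : dist (a + b) b = dist a 0 := by
      have := htrans a 0 b
      rwa [zero_add] at this
    calc dist (a + b) 0 ≤ dist (a + b) b + dist b 0 := dist_triangle _ _ _
      _ = dist a 0 + dist b 0 := by rw [h1]
  have hd_sum : ∀ (s : Finset ℕ) (x : ℕ → V),
      dist (∑ i ∈ s, x i) 0 ≤ ∑ i ∈ s, dist (x i) 0 := by
    intro s x
    induction s using Finset.cons_induction with
    | empty => simp
    | cons a s ha ih =>
      rw [Finset.sum_cons, Finset.sum_cons]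
      exact (hd_add _ _).trans (by linarith)
  -- extract the fast subsequence
  have hev : ∀ k : ℕ, ∀ᶠ n in atTop, dist (f n) g < (1/2 : ℝ) ^ k := by
    intro k
    obtain ⟨N, hN⟩ := Metric.tendsto_atTop.mp hf ((1/2 : ℝ) ^ k) (by positivity)
    exact eventually_atTop.mpr ⟨N, hN⟩
  obtain ⟨φ, hφ, hφ2⟩ := extraction_forall_of_eventually hev
  refine ⟨φ, hφ, fun ψ hψ => ?_⟩
  set h : ℕ → V := fun l => f (φ (ψ l)) - g with hh
  have hdl : ∀ l, dist (h l) 0 < (1/2 : ℝ) ^ l := by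
    intro l
    have h1 : dist (h l) 0 = dist (f (φ (ψ l))) g := by
      have := htrans (h l) 0 g
      rw [zero_add] at this
      simpa [hh, sub_add_cancel] using this.symm
    rw [h1]
    exact lt_of_lt_of_le (hφ2 (ψ l)) (by
      apply pow_le_pow_of_le_one (by norm_num) (by norm_num) (hψ.le_apply))
  -- rewrite the mean
  have hmean : ∀ N : ℕ, ((N + 1 : ℝ))⁻¹ • ∑ l ∈ Finset.range (N + 1), f (φ (ψ l))
      = g + ((N + 1 : ℝ))⁻¹ • ∑ l ∈ Finset.range (N + 1), h l := by
    intro N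
    have hsum : ∑ l ∈ Finset.range (N + 1), f (φ (ψ l))
        = (∑ l ∈ Finset.range (N + 1), h l) + (N + 1 : ℕ) • g := by
      simp [hh, Finset.sum_sub_distrib, sub_add_cancel]
    rw [hsum, smul_add]
    have : ((N + 1 : ℝ))⁻¹ • ((N + 1 : ℕ) • g) = g := by
      rw [← Nat.cast_smul_eq_nsmul ℝ, smul_smul]
      rw [Nat.cast_add, Nat.cast_one, inv_mul_cancel₀ (by positivity), one_smul]
    rw [this, add_comm]
  -- prove convergence with Metric.tendsto_atTop
  rw [Metric.tendsto_atTop]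
  intro ε hε
  -- pick M with tail small
  obtain ⟨M, hM⟩ : ∃ M : ℕ, 2 * (1/2 : ℝ) ^ M < ε / 2 := by
    obtain ⟨M, hM⟩ := exists_pow_lt_of_lt_one (x := ε / 4) (by positivity)
      (by norm_num : (1/2 : ℝ) < 1)
    exact ⟨M, by linarith⟩
  set S : V := ∑ l ∈ Finset.range M, h l with hS
  have hsm : Tendsto (fun N : ℕ => ((N + 1 : ℝ))⁻¹ • S) atTop (nhds 0) := by
    refine (hsmul S).comp ?_
    have := tendsto_one_div_add_atTop_nhds_zero_nat (𝕜 := ℝ)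
    simpa [one_div] using this
  have hev2 : ∀ᶠ N : ℕ in atTop, dist (((N + 1 : ℝ))⁻¹ • S) 0 < ε / 2 := by
    have := Metric.tendsto_atTop.mp hsm (ε / 2) (by linarith)
    obtain ⟨N₁, hN₁⟩ := this
    exact eventually_atTop.mpr ⟨N₁, hN₁⟩
  obtain ⟨N₁, hN₁⟩ := eventually_atTop.mp hev2
  refine ⟨max N₁ M, fun N hN => ?_⟩
  have hNM : M ≤ N + 1 := le_trans (le_max_right N₁ M) (by omega)
  have hinv : |((N + 1 : ℝ))⁻¹| ≤ 1 := by
    rw [abs_of_pos (by positivity)]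
    rw [inv_le_one_iff₀]
    right; linarith
  -- split the sum
  have hsplit : ((N + 1 : ℝ))⁻¹ • ∑ l ∈ Finset.range (N + 1), h l
      = ((N + 1 : ℝ))⁻¹ • S + ∑ l ∈ Finset.Ico M (N + 1), ((N + 1 : ℝ))⁻¹ • h l := by
    rw [← Finset.smul_sum, ← smul_add, hS]
    congr 1
    rw [Finset.range_eq_Ico, Finset.range_eq_Ico]
    exact (Finset.sum_Ico_consecutive _ (Nat.zero_le M) hNM).symm
  have hdg : dist (((N + 1 : ℝ))⁻¹ • ∑ l ∈ Finset.range (N + 1), f (φ (ψ l))) g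
      = dist (((N + 1 : ℝ))⁻¹ • ∑ l ∈ Finset.range (N + 1), h l) 0 := by
    rw [hmean N]
    have := htrans (((N + 1 : ℝ))⁻¹ • ∑ l ∈ Finset.range (N + 1), h l) 0 g
    rw [zero_add] at this
    rw [← this, add_comm]
  rw [hdg, hsplit]
  have htail : ∑ l ∈ Finset.Ico M (N + 1), dist (((N + 1 : ℝ))⁻¹ • h l) 0
      ≤ 2 * (1/2 : ℝ) ^ M := by
    calc ∑ l ∈ Finset.Ico M (N + 1), dist (((N + 1 : ℝ))⁻¹ • h l) 0
        ≤ ∑ l ∈ Finset.Ico M (N + 1), (1/2 : ℝ) ^ l := by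
          refine Finset.sum_le_sum fun l _ => ?_
          exact le_trans (hbal _ _ hinv) (hdl l).le
      _ ≤ (1/2 : ℝ) ^ M / (1 - 1/2) :=
          geom_sum_Ico_le_of_lt_one (by norm_num) (by norm_num)
      _ = 2 * (1/2 : ℝ) ^ M := by ring
  calc dist (((N + 1 : ℝ))⁻¹ • S + ∑ l ∈ Finset.Ico M (N + 1), ((N + 1 : ℝ))⁻¹ • h l) 0
      ≤ dist (((N + 1 : ℝ))⁻¹ • S) 0
        + dist (∑ l ∈ Finset.Ico M (N + 1), ((N + 1 : ℝ))⁻¹ • h l) 0 := hd_add _ _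
    _ ≤ dist (((N + 1 : ℝ))⁻¹ • S) 0
        + ∑ l ∈ Finset.Ico M (N + 1), dist (((N + 1 : ℝ))⁻¹ • h l) 0 := by
          have := hd_sum (Finset.Ico M (N + 1)) (fun l => ((N + 1 : ℝ))⁻¹ • h l)
          linarith
    _ < ε / 2 + ε / 2 := by
          have h1 := hN₁ N (le_trans (le_max_left N₁ M) hN)
          linarith
    _ = ε := by ring
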